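/- Let γ > 1, θ = (γ-1)/2, and let ψ(s) = ½ s|s|. For the corresponding weak entropy flux q̌(ρ, m) of the isentropic Euler system there exists M = M(γ) > 0 such that q̌(ρ, m) ≥ (1/M)(ρ|u|³ + ρ^{γ+θ}) − M(ρ + ρ|u|² + ρ^γ) for all ρ > 0 and u = m/ρ ∈ ℝ. -/
import Mathlib

open MeasureTheory intervalIntegral Real Set

/-- Integrability of the weight `(1-s²)^λ` on `[0,1]` for `λ > -1`. -/
lemma weight_int01 {lam : ℝ} (hlam : -1 < lam) :
    IntervalIntegrable (fun s : ℝ => (1 - s ^ 2) ^ lam) volume 0 1 := by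
  have h1 : IntervalIntegrable (fun s : ℝ => (1 - s) ^ lam) volume 0 1 := by
    have h := (intervalIntegrable_rpow' (a := 0) (b := 1) hlam).comp_sub_left 1
    simpa using h.symm
  set C : ℝ := max 1 ((2:ℝ) ^ lam) with hC
  have hC0 : 0 ≤ C := le_trans zero_le_one (le_max_left _ _)
  refine ((h1.const_mul C).mono_fun ?_ ?_)
  · apply Measurable.aestronglyMeasurable
    fun_prop
  · filter_upwards [ae_restrict_mem measurableSet_uIoc] with s hs
    rw [Set.uIoc_of_le (by norm_num : (0:ℝ) ≤ 1)] at hs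
    obtain ⟨hs0, hs1⟩ := hs
    have h1s : (0:ℝ) ≤ 1 - s := by linarith
    have h1s' : (0:ℝ) ≤ 1 + s := by linarith
    have hw0 : (0:ℝ) ≤ (1 - s ^ 2) ^ lam := by
      apply Real.rpow_nonneg; nlinarith
    have hb : (1 + s) ^ lam ≤ C := by
      rcases le_total 0 lam with h | h
      · refine le_trans (Real.rpow_le_rpow h1s' (by linarith) h) (le_max_right _ _)
      · refine le_trans (Real.rpow_le_one_of_one_le_of_nonpos (by linarith) h) (le_max_left _ _)
    have key : (1 - s ^ 2) ^ lam = (1 + s) ^ lam * (1 - s) ^ lam := by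
      rw [← Real.mul_rpow h1s' h1s]; ring_nf
    rw [Real.norm_eq_abs, Real.norm_eq_abs, abs_of_nonneg hw0, abs_of_nonneg
      (mul_nonneg hC0 (Real.rpow_nonneg h1s _)), key]
    exact mul_le_mul_of_nonneg_right hb (Real.rpow_nonneg h1s _)

lemma weight_int {lam : ℝ} (hlam : -1 < lam) :
    IntervalIntegrable (fun s : ℝ => (1 - s ^ 2) ^ lam) volume (-1) 1 := by
  have h2 : IntervalIntegrable (fun s : ℝ => (1 - s ^ 2) ^ lam) volume (-1) 0 := by
    have := (IntervalIntegrable.iff_comp_neg).mp (weight_int01 hlam).symm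
    simpa using this
  exact h2.trans (weight_int01 hlam)

/-- A continuous function times the weight is interval integrable on subintervals of `[-1,1]`. -/
lemma cont_mul_weight_int {lam : ℝ} (hlam : -1 < lam) {F : ℝ → ℝ} (hF : Continuous F)
    {a b : ℝ} (ha : a ∈ Set.Icc (-1:ℝ) 1) (hb : b ∈ Set.Icc (-1:ℝ) 1) :
    IntervalIntegrable (fun s : ℝ => F s * (1 - s ^ 2) ^ lam) volume a b := by
  obtain ⟨C, hC⟩ := (isCompact_Icc (a := (-1:ℝ)) (b := 1)).exists_bound_of_continuousOn
    hF.continuousOn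
  have hC0 : 0 ≤ C := le_trans (norm_nonneg _) (hC 0 (by norm_num))
  have hsub : Set.uIcc a b ⊆ Set.Icc (-1:ℝ) 1 := by
    rw [← Set.uIcc_of_le (by norm_num : (-1:ℝ) ≤ 1)]
    exact Set.uIcc_subset_uIcc (by rwa [Set.uIcc_of_le (by norm_num : (-1:ℝ) ≤ 1)])
      (by rwa [Set.uIcc_of_le (by norm_num : (-1:ℝ) ≤ 1)])
  have hw : IntervalIntegrable (fun s : ℝ => C * (1 - s ^ 2) ^ lam) volume a b :=
    ((weight_int hlam).const_mul C).mono_set (by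
      rwa [Set.uIcc_of_le (by norm_num : (-1:ℝ) ≤ 1)])
  refine hw.mono_fun ?_ ?_
  · apply Measurable.aestronglyMeasurable
    exact hF.measurable.mul (by fun_prop)
  · filter_upwards [ae_restrict_mem measurableSet_uIoc] with s hs
    have hs' : s ∈ Set.Icc (-1:ℝ) 1 := hsub (Set.uIoc_subset_uIcc hs)
    have hw0 : (0:ℝ) ≤ (1 - s ^ 2) ^ lam := by
      apply Real.rpow_nonneg
      obtain ⟨h1, h2⟩ := hs'; nlinarith
    rw [Real.norm_eq_abs, Real.norm_eq_abs, abs_mul, abs_of_nonneg hw0,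
      abs_of_nonneg (mul_nonneg hC0 hw0)]
    exact mul_le_mul_of_nonneg_right (hC s hs') hw0

/-- The key pointwise algebraic inequality. -/
lemma key_alg {th u b c0 : ℝ} (hth : 0 < th) (hb : 0 ≤ b)
    (hc0 : 0 ≤ c0) (hc1 : c0 ≤ 1/2) (hc2 : c0 ≤ th/2) :
    c0 * (|u| ^ 3 + b ^ 3) ≤
      (u + th * b) * (1/2 * (u + b) * |u + b|)
        + (u - th * b) * (1/2 * (u - b) * |u - b|) := by
  rcases le_total 0 u with hu | hu
  · have hub : 0 ≤ u ^ 3 + b ^ 3 := by positivity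
    have hu2b : (0:ℝ) ≤ u ^ 2 * b := by positivity
    have hub2 : (0:ℝ) ≤ u * b ^ 2 := mul_nonneg hu (sq_nonneg b)
    have hq : (0:ℝ) ≤ u ^ 2 + u * b + b ^ 2 := by nlinarith [mul_nonneg hu hb]
    rw [abs_of_nonneg hu, abs_of_nonneg (by linarith : (0:ℝ) ≤ u + b)]
    rcases le_total 0 (u - b) with h1 | h1
    · rw [abs_of_nonneg h1]
      nlinarith [mul_nonneg (by linarith : (0:ℝ) ≤ 1/2 - c0) hub,
        mul_nonneg h1 hq, mul_nonneg hth.le hub2, hub2]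
    · rw [abs_of_nonpos h1]
      nlinarith [mul_nonneg (by linarith : (0:ℝ) ≤ th/2 - c0) hub,
        mul_nonneg hth.le (mul_nonneg (by linarith : (0:ℝ) ≤ b - u) hq),
        hu2b, mul_nonneg hth.le hu2b]
  · have hv : 0 ≤ -u := neg_nonneg.mpr hu
    have hub : 0 ≤ (-u) ^ 3 + b ^ 3 := by positivity
    have hu2b : (0:ℝ) ≤ u ^ 2 * b := by positivity
    have hvb2 : (0:ℝ) ≤ (-u) * b ^ 2 := mul_nonneg hv (sq_nonneg b)
    have hq : (0:ℝ) ≤ u ^ 2 - u * b + b ^ 2 := by nlinarith [mul_nonneg hv hb]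
    rw [abs_of_nonpos hu, abs_of_nonpos (by linarith : u - b ≤ 0)]
    rcases le_total 0 (u + b) with h1 | h1
    · rw [abs_of_nonneg h1]
      nlinarith [mul_nonneg (by linarith : (0:ℝ) ≤ th/2 - c0) hub,
        mul_nonneg hth.le (mul_nonneg h1 hq), hu2b, mul_nonneg hth.le hu2b]
    · rw [abs_of_nonpos h1]
      nlinarith [mul_nonneg (by linarith : (0:ℝ) ≤ 1/2 - c0) hub,
        mul_nonneg (by linarith : (0:ℝ) ≤ -(u + b)) hq,
        hvb2, mul_nonneg hth.le hvb2]

/-- The weak entropy flux generated by `ψ(s) = ½ s|s|`. -/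
noncomputable def qcheck (γ ρ m : ℝ) : ℝ :=
  ρ * ∫ s in (-1 : ℝ)..1,
    (m / ρ + (γ - 1) / 2 * ρ ^ ((γ - 1) / 2) * s)
      * (1 / 2 * (m / ρ + ρ ^ ((γ - 1) / 2) * s) * |m / ρ + ρ ^ ((γ - 1) / 2) * s|)
      * (1 - s ^ 2) ^ ((3 - γ) / (2 * (γ - 1)))

set_option maxHeartbeats 1000000 in
/-- Coercivity lower bound for the entropy flux `q̌`:
`q̌(ρ,m) ≥ (1/M)(ρ|u|³ + ρ^{γ+θ}) − M(ρ + ρ|u|² + ρ^γ)`. -/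
theorem stmt9 (γ : ℝ) (hγ : 1 < γ) :
    ∃ M > 0, ∀ ρ u : ℝ, 0 < ρ →
      qcheck γ ρ (ρ * u)
        ≥ 1 / M * (ρ * |u| ^ (3 : ℕ) + ρ ^ (γ + (γ - 1) / 2))
          - M * (ρ + ρ * u ^ 2 + ρ ^ γ) := by
  set th : ℝ := (γ - 1) / 2 with hthdef
  set lam : ℝ := (3 - γ) / (2 * (γ - 1)) with hlamdef
  have hth : 0 < th := by rw [hthdef]; linarith
  have hlam : -1 < lam := by
    rw [hlamdef, lt_div_iff₀ (by linarith : (0:ℝ) < 2 * (γ - 1))]; linarith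
  set c0 : ℝ := min 1 th / 2 with hc0def
  have hc0pos : 0 < c0 := by
    rw [hc0def]; positivity
  have hc0a : c0 ≤ 1/2 := by
    rw [hc0def]; have := min_le_left 1 th; linarith
  have hc0b : c0 ≤ th/2 := by
    rw [hc0def]; have := min_le_right 1 th; linarith
  set K : ℝ := ∫ s in (0:ℝ)..1, s ^ 3 * (1 - s ^ 2) ^ lam with hKdef
  have hmem0 : (0:ℝ) ∈ Set.Icc (-1:ℝ) 1 := by norm_num
  have hmem1 : (1:ℝ) ∈ Set.Icc (-1:ℝ) 1 := by norm_num
  have hmemn1 : (-1:ℝ) ∈ Set.Icc (-1:ℝ) 1 := by norm_num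
  have hKint : IntervalIntegrable (fun s : ℝ => s ^ 3 * (1 - s ^ 2) ^ lam) volume 0 1 :=
    cont_mul_weight_int hlam (by continuity) hmem0 hmem1
  have hK : 0 < K := by
    rw [hKdef]
    refine intervalIntegral_pos_of_pos_on hKint ?_ (by norm_num)
    intro x hx
    have h1 : 0 < 1 - x ^ 2 := by nlinarith [hx.1, hx.2]
    exact mul_pos (pow_pos hx.1 3) (Real.rpow_pos_of_pos h1 _)
  have hcK : 0 < c0 * K := mul_pos hc0pos hK
  refine ⟨max (1/(c0*K)) 1, lt_of_lt_of_le one_pos (le_max_right _ _), ?_⟩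
  intro ρ u hρ
  set M : ℝ := max (1/(c0*K)) 1 with hMdef
  have hM : 0 < M := lt_of_lt_of_le one_pos (le_max_right _ _)
  set a : ℝ := ρ ^ th with hadef
  have ha : 0 < a := Real.rpow_pos_of_pos hρ th
  set F : ℝ → ℝ := fun s => (u + th * a * s) * (1/2 * (u + a * s) * |u + a * s|) with hFdef
  have hFc : Continuous F := by
    rw [hFdef]; fun_prop
  have hFnegc : Continuous fun s : ℝ => F (-s) := hFc.comp continuous_neg
  have hu : ρ * u / ρ = u := by field_simp
  have hq : qcheck γ ρ (ρ * u) = ρ * ∫ s in (-1:ℝ)..1, F s * (1 - s ^ 2) ^ lam := by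
    simp only [qcheck, hu, hFdef, hadef, hthdef, hlamdef]
  have hI1 : IntervalIntegrable (fun s : ℝ => F s * (1 - s ^ 2) ^ lam) volume (-1) 0 :=
    cont_mul_weight_int hlam hFc hmemn1 hmem0
  have hI2 : IntervalIntegrable (fun s : ℝ => F s * (1 - s ^ 2) ^ lam) volume 0 1 :=
    cont_mul_weight_int hlam hFc hmem0 hmem1
  have hI3 : IntervalIntegrable (fun s : ℝ => F (-s) * (1 - s ^ 2) ^ lam) volume 0 1 :=
    cont_mul_weight_int hlam hFnegc hmem0 hmem1
  have hI4 : IntervalIntegrable (fun s : ℝ => (F s + F (-s)) * (1 - s ^ 2) ^ lam) volume 0 1 :=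
    cont_mul_weight_int hlam (hFc.add hFnegc) hmem0 hmem1
  have e1 : (∫ s in (-1:ℝ)..0, F s * (1 - s ^ 2) ^ lam)
      = ∫ s in (0:ℝ)..1, F (-s) * (1 - s ^ 2) ^ lam := by
    have h := intervalIntegral.integral_comp_neg (a := 0) (b := 1)
      (fun s : ℝ => F s * (1 - s ^ 2) ^ lam)
    simp only [neg_zero, neg_neg] at h
    rw [← h]
    refine intervalIntegral.integral_congr fun s _ => ?_
    have : (-s : ℝ) ^ 2 = s ^ 2 := by ring
    rw [this]
  have e2 : (∫ s in (-1:ℝ)..1, F s * (1 - s ^ 2) ^ lam)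
      = ∫ s in (0:ℝ)..1, (F s + F (-s)) * (1 - s ^ 2) ^ lam := by
    rw [← intervalIntegral.integral_add_adjacent_intervals hI1 hI2, e1,
      ← intervalIntegral.integral_add hI3 hI2]
    exact intervalIntegral.integral_congr fun s _ => by ring
  have pointwise : ∀ s ∈ Set.Icc (0:ℝ) 1,
      (c0 * (|u| ^ 3 + a ^ 3)) * (s ^ 3 * (1 - s ^ 2) ^ lam)
        ≤ (F s + F (-s)) * (1 - s ^ 2) ^ lam := by
    intro s hs
    have hw0 : 0 ≤ (1 - s ^ 2) ^ lam := by
      apply Real.rpow_nonneg; nlinarith [hs.1, hs.2]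
    have key := key_alg (u := u) (b := a * s) hth (mul_nonneg ha.le hs.1)
      hc0pos.le hc0a hc0b
    have hFs : F s + F (-s)
        = (u + th * (a * s)) * (1/2 * (u + a * s) * |u + a * s|)
          + (u - th * (a * s)) * (1/2 * (u - a * s) * |u - a * s|) := by
      simp only [hFdef, mul_neg, ← sub_eq_add_neg]
      ring
    have hs3 : s ^ 3 ≤ 1 := by nlinarith [hs.1, hs.2, sq_nonneg s]
    have h1 : c0 * (|u| ^ 3 + a ^ 3) * s ^ 3 ≤ c0 * (|u| ^ 3 + (a * s) ^ 3) := by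
      nlinarith [mul_nonneg (mul_nonneg hc0pos.le (pow_nonneg (abs_nonneg u) 3))
        (by linarith : (0:ℝ) ≤ 1 - s ^ 3), pow_nonneg ha.le 3, pow_nonneg hs.1 3,
        mul_nonneg hc0pos.le (mul_nonneg (pow_nonneg ha.le 3) (pow_nonneg hs.1 3))]
    have h2 : c0 * (|u| ^ 3 + a ^ 3) * s ^ 3 ≤ F s + F (-s) := by
      rw [hFs]; exact h1.trans key
    calc (c0 * (|u| ^ 3 + a ^ 3)) * (s ^ 3 * (1 - s ^ 2) ^ lam)
        = (c0 * (|u| ^ 3 + a ^ 3) * s ^ 3) * (1 - s ^ 2) ^ lam := by ring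
      _ ≤ (F s + F (-s)) * (1 - s ^ 2) ^ lam := mul_le_mul_of_nonneg_right h2 hw0
  have hmono : (∫ s in (0:ℝ)..1, (c0 * (|u| ^ 3 + a ^ 3)) * (s ^ 3 * (1 - s ^ 2) ^ lam))
      ≤ ∫ s in (0:ℝ)..1, (F s + F (-s)) * (1 - s ^ 2) ^ lam :=
    intervalIntegral.integral_mono_on (by norm_num)
      (hKint.const_mul _) hI4 pointwise
  have hconst : (∫ s in (0:ℝ)..1, (c0 * (|u| ^ 3 + a ^ 3)) * (s ^ 3 * (1 - s ^ 2) ^ lam))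
      = c0 * (|u| ^ 3 + a ^ 3) * K := by
    rw [hKdef]; exact intervalIntegral.integral_const_mul _ _
  have hmain : c0 * (|u| ^ 3 + a ^ 3) * K ≤ ∫ s in (-1:ℝ)..1, F s * (1 - s ^ 2) ^ lam := by
    rw [e2, ← hconst]; exact hmono
  have hρa : ρ * a ^ 3 = ρ ^ (γ + (γ - 1) / 2) := by
    rw [hadef, ← Real.rpow_natCast (ρ ^ th) 3, ← Real.rpow_mul hρ.le]
    rw [show ρ ^ (γ + (γ - 1) / 2) = ρ ^ (1 + th * (3:ℕ)) by
      rw [hthdef]; norm_num; ring_nf]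
    rw [Real.rpow_add hρ, Real.rpow_one]
  have h5 : ρ * (c0 * (|u| ^ 3 + a ^ 3) * K)
      = c0 * K * (ρ * |u| ^ 3 + ρ ^ (γ + (γ - 1) / 2)) := by
    rw [← hρa]; ring
  have h6 : ρ * (c0 * (|u| ^ 3 + a ^ 3) * K) ≤ qcheck γ ρ (ρ * u) := by
    rw [hq]; exact mul_le_mul_of_nonneg_left hmain hρ.le
  have h1M : 1 / M ≤ c0 * K := by
    rw [div_le_iff₀ hM]
    have h7 : 1 / (c0 * K) ≤ M := le_max_left _ _
    calc (1:ℝ) = c0 * K * (1 / (c0 * K)) := by field_simp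
      _ ≤ c0 * K * M := mul_le_mul_of_nonneg_left h7 hcK.le
  have hA : 0 ≤ ρ * |u| ^ 3 + ρ ^ (γ + (γ - 1) / 2) := by positivity
  have hB : 0 ≤ M * (ρ + ρ * u ^ 2 + ρ ^ γ) := by positivity
  have h8 : 1 / M * (ρ * |u| ^ 3 + ρ ^ (γ + (γ - 1) / 2))
      ≤ c0 * K * (ρ * |u| ^ 3 + ρ ^ (γ + (γ - 1) / 2)) :=
    mul_le_mul_of_nonneg_right h1M hA
  have h9 : c0 * K * (ρ * |u| ^ 3 + ρ ^ (γ + (γ - 1) / 2)) ≤ qcheck γ ρ (ρ * u) := by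
    rw [← h5]; exact h6
  rw [ge_iff_le]
  linarith [h8, h9, hB]
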